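/- Let (s_k) be a nonincreasing sequence of nonnegative reals, α > 1 and β > 0 such that s_{k+1}^α ≤ β(s_k − s_{k+1}) for all sufficiently large k. Then there exists τ > 0 such that s_k ≤ τ k^{−1/(α−1)} for all sufficiently large k. -/

import Mathlib

open Real

/-- Key one-step decrease in the `b ≥ a/2` regime. -/
lemma key_step (θ β a b : ℝ) (hθ : 0 < θ) (hβ : 0 < β) (hb : 0 < b) (hba : b ≤ a)
    (hrec : b ^ (θ + 1) ≤ β * (a - b)) (h2 : a ≤ 2 * b) :
    a ^ (-θ) + θ / (β * 2 ^ (θ + 1)) ≤ b ^ (-θ) := by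
  have ha : 0 < a := lt_of_lt_of_le hb hba
  set P := a ^ θ with hPdef
  set Q := b ^ θ with hQdef
  have hP : 0 < P := rpow_pos_of_pos ha θ
  have hQ : 0 < Q := rpow_pos_of_pos hb θ
  have hQP : Q ≤ P := rpow_le_rpow hb.le hba hθ.le
  have h2θ : (0:ℝ) < (2:ℝ) ^ θ := rpow_pos_of_pos two_pos θ
  have hP2 : P ≤ 2 ^ θ * Q := by
    have : a ^ θ ≤ (2 * b) ^ θ := rpow_le_rpow ha.le h2 hθ.le
    rwa [mul_rpow (by norm_num) hb.le] at this
  have hab : b ^ θ * b / β ≤ a - b := by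
    rw [div_le_iff₀ hβ]
    have : b ^ (θ + 1) = b ^ θ * b := by
      rw [rpow_add hb, rpow_one]
    nlinarith [hrec]
  -- main: θ/(2β) Q² ≤ P - Q
  have hmain : θ / (2 * β) * Q ^ 2 ≤ P - Q := by
    rcases le_total 1 θ with hθ1 | hθ1
    · -- Bernoulli, convex case
      have hs : (-1:ℝ) ≤ (a - b) / b := by
        have : 0 ≤ (a - b) / b := div_nonneg (by linarith) hb.le
        linarith
      have hbern := one_add_mul_self_le_rpow_one_add hs hθ1
      have h1s : 1 + (a - b) / b = a / b := by field_simp; ring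
      rw [h1s, div_rpow ha.le hb.le] at hbern
      -- P/Q ≥ 1 + θ(a-b)/b
      have h3 : Q * (1 + θ * ((a - b) / b)) ≤ P := by
        calc Q * (1 + θ * ((a - b) / b)) ≤ Q * (P / Q) := by
              apply mul_le_mul_of_nonneg_left hbern hQ.le
          _ = P := by field_simp
      have h4 : Q * (θ * ((a - b) / b)) ≥ θ / β * Q ^ 2 := by
        have hb' : b ≠ 0 := hb.ne'
        have hab' : b ^ θ * b ≤ β * (a - b) := by
          rw [div_le_iff₀ hβ] at hab; linarith [hab]
        have h5 : (a - b) / b ≥ Q / β := by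
          rw [ge_iff_le, div_le_div_iff₀ hβ hb]
          nlinarith [hab']
        calc θ / β * Q ^ 2 = Q * (θ * (Q / β)) := by ring
          _ ≤ Q * (θ * ((a - b) / b)) := by
              apply mul_le_mul_of_nonneg_left _ hQ.le
              exact mul_le_mul_of_nonneg_left h5 hθ.le
      have h3' : Q + Q * (θ * ((a - b) / b)) ≤ P := by nlinarith [h3]
      have hdiv : θ / (2 * β) ≤ θ / β := by
        apply div_le_div_of_nonneg_left hθ.le hβ; linarith
      have : θ / (2 * β) * Q ^ 2 ≤ θ / β * Q ^ 2 :=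
        mul_le_mul_of_nonneg_right hdiv (sq_nonneg Q)
      linarith [h3', h4]
    · -- Bernoulli, concave case
      have hs : (-1:ℝ) ≤ b / a - 1 := by
        have : 0 ≤ b / a := by positivity
        linarith
      have hbern := rpow_one_add_le_one_add_mul_self (by linarith : (-1:ℝ) ≤ b / a - 1) hθ.le hθ1
      have h1s : 1 + (b / a - 1) = b / a := by ring
      rw [h1s, div_rpow hb.le ha.le] at hbern
      -- Q/P ≤ 1 + θ(b/a - 1), so P - Q ≥ θ(a-b)P/a ≥ θ(a-b)Q/a
      have h3 : Q ≤ P * (1 + θ * (b / a - 1)) := by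
        calc Q = P * (Q / P) := by field_simp
          _ ≤ P * (1 + θ * (b / a - 1)) := mul_le_mul_of_nonneg_left hbern hP.le
      have h4 : P * (θ * (1 - b / a)) ≥ θ / (2 * β) * Q ^ 2 := by
        have h5 : 1 - b / a = (a - b) / a := by field_simp
        have h6 : (a - b) / a ≥ Q / (2 * β) := by
          rw [ge_iff_le, div_le_div_iff₀ (by positivity) ha]
          -- Q * a ≤ (a-b) * (2β); a ≤ 2b, (a-b) ≥ Q b/β
          calc Q * a ≤ Q * (2 * b) := mul_le_mul_of_nonneg_left h2 hQ.le
            _ = 2 * β * (Q * b / β) := by field_simp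
            _ ≤ 2 * β * (a - b) := by
                apply mul_le_mul_of_nonneg_left _ (by positivity)
                calc Q * b / β = b ^ θ * b / β := rfl
                  _ ≤ a - b := hab
            _ = (a - b) * (2 * β) := by ring
        calc θ / (2 * β) * Q ^ 2 = Q * (θ * (Q / (2 * β))) := by ring
          _ ≤ Q * (θ * ((a - b) / a)) := by
              apply mul_le_mul_of_nonneg_left (mul_le_mul_of_nonneg_left h6 hθ.le) hQ.le
          _ ≤ P * (θ * ((a - b) / a)) := by
              apply mul_le_mul_of_nonneg_right hQP
              have : 0 ≤ (a - b) / a := by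
                apply div_nonneg (by linarith) ha.le
              positivity
          _ = P * (θ * (1 - b / a)) := by rw [h5]
      nlinarith [h3, h4]
  -- conclude: P⁻¹ + c ≤ Q⁻¹ with c = θ/(β 2^(θ+1))
  have hc2 : θ / (β * 2 ^ (θ + 1)) * (2:ℝ) ^ θ = θ / (2 * β) := by
    rw [rpow_add two_pos, rpow_one]
    field_simp
  have hgoal : Q + θ / (β * 2 ^ (θ + 1)) * (P * Q) ≤ P := by
    have hcPQ : θ / (β * 2 ^ (θ + 1)) * (P * Q) ≤ θ / (2 * β) * Q ^ 2 := by
      calc θ / (β * 2 ^ (θ + 1)) * (P * Q)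
          ≤ θ / (β * 2 ^ (θ + 1)) * ((2 ^ θ * Q) * Q) := by
            apply mul_le_mul_of_nonneg_left _ (by positivity)
            exact mul_le_mul_of_nonneg_right hP2 hQ.le
        _ = θ / (β * 2 ^ (θ + 1)) * (2:ℝ) ^ θ * Q ^ 2 := by ring
        _ = θ / (2 * β) * Q ^ 2 := by rw [hc2]
    linarith [hmain]
  rw [rpow_neg ha.le, rpow_neg hb.le, ← hPdef, ← hQdef]
  have h7 : (P⁻¹ + θ / (β * 2 ^ (θ + 1))) * (P * Q) ≤ Q⁻¹ * (P * Q) := by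
    have e1 : (P⁻¹ + θ / (β * 2 ^ (θ + 1))) * (P * Q) = Q + θ / (β * 2 ^ (θ + 1)) * (P * Q) := by
      field_simp
    have e2 : Q⁻¹ * (P * Q) = P := by field_simp
    rw [e1, e2]; exact hgoal
  exact le_of_mul_le_mul_right h7 (mul_pos hP hQ)

/-- Combined one-step decrease. -/
lemma key_step' (θ β A a b : ℝ) (hθ : 0 < θ) (hβ : 0 < β) (hb : 0 < b) (hba : b ≤ a)
    (haA : a ≤ A) (hrec : b ^ (θ + 1) ≤ β * (a - b)) :
    a ^ (-θ) + min (θ / (β * 2 ^ (θ + 1))) (((2:ℝ) ^ θ - 1) * A ^ (-θ)) ≤ b ^ (-θ) := by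
  have ha : 0 < a := lt_of_lt_of_le hb hba
  have hA : 0 < A := lt_of_lt_of_le ha haA
  rcases le_total a (2 * b) with h2 | h2
  · calc a ^ (-θ) + min (θ / (β * 2 ^ (θ + 1))) (((2:ℝ) ^ θ - 1) * A ^ (-θ))
        ≤ a ^ (-θ) + θ / (β * 2 ^ (θ + 1)) := by
          exact add_le_add_right (min_le_left _ _) _
      _ ≤ b ^ (-θ) := key_step θ β a b hθ hβ hb hba hrec h2
  · -- b ≤ a/2
    have hba2 : b ≤ a / 2 := by linarith
    have h3 : (a / 2) ^ (-θ) ≤ b ^ (-θ) :=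
      rpow_le_rpow_of_nonpos hb hba2 (by linarith)
    have h4 : (a / 2) ^ (-θ) = 2 ^ θ * a ^ (-θ) := by
      rw [div_rpow ha.le (by norm_num), show -θ = -θ from rfl]
      rw [rpow_neg (by norm_num : (0:ℝ) ≤ 2)]
      field_simp
    have h5 : A ^ (-θ) ≤ a ^ (-θ) := rpow_le_rpow_of_nonpos ha haA (by linarith)
    have h6 : (1:ℝ) < 2 ^ θ := by
      rw [show (1:ℝ) = (2:ℝ) ^ (0:ℝ) by simp]
      exact rpow_lt_rpow_of_exponent_lt one_lt_two hθ
    calc a ^ (-θ) + min (θ / (β * 2 ^ (θ + 1))) (((2:ℝ) ^ θ - 1) * A ^ (-θ))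
        ≤ a ^ (-θ) + ((2:ℝ) ^ θ - 1) * A ^ (-θ) := add_le_add_right (min_le_right _ _) _
      _ ≤ a ^ (-θ) + ((2:ℝ) ^ θ - 1) * a ^ (-θ) := by
          apply add_le_add_right
          exact mul_le_mul_of_nonneg_left h5 (by linarith)
      _ = 2 ^ θ * a ^ (-θ) := by ring
      _ = (a / 2) ^ (-θ) := h4.symm
      _ ≤ b ^ (-θ) := h3

/-- Sublinear-rate case (`α > 1`) of the recursive decrease lemma. -/
theorem stmt_7 (s : ℕ → ℝ) (hmono : Antitone s) (hnonneg : ∀ k, 0 ≤ s k)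
    (α β : ℝ) (hα : 1 < α) (hβ : 0 < β)
    (hrec : ∃ k₁ : ℕ, ∀ k ≥ k₁, s (k + 1) ^ α ≤ β * (s k - s (k + 1))) :
    ∃ τ : ℝ, 0 < τ ∧ ∃ k₀ : ℕ, ∀ k ≥ k₀,
      s k ≤ τ * (k : ℝ) ^ (-(1 / (α - 1)) : ℝ) := by
  obtain ⟨k₁, hrec⟩ := hrec
  set θ := α - 1 with hθdef
  have hθ : 0 < θ := by simp [hθdef]; linarith
  have hθ1 : θ + 1 = α := by ring
  by_cases hpos : ∀ k ≥ k₁, 0 < s k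
  · -- positive case
    have hA : 0 < s k₁ := hpos k₁ le_rfl
    set c := min (θ / (β * 2 ^ (θ + 1))) (((2:ℝ) ^ θ - 1) * (s k₁) ^ (-θ)) with hcdef
    have h6 : (1:ℝ) < 2 ^ θ := by
      rw [show (1:ℝ) = (2:ℝ) ^ (0:ℝ) by simp]
      exact rpow_lt_rpow_of_exponent_lt one_lt_two hθ
    have hc : 0 < c := by
      apply lt_min
      · positivity
      · have : (0:ℝ) < (s k₁) ^ (-θ) := rpow_pos_of_pos hA _
        nlinarith
    -- induction claim
    have hclaim : ∀ n : ℕ, (s k₁) ^ (-θ) + c * n ≤ (s (k₁ + n)) ^ (-θ) := by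
      intro n
      induction n with
      | zero => simp
      | succ n ih =>
        have hstep := key_step' θ β (s k₁) (s (k₁ + n)) (s (k₁ + n + 1)) hθ hβ
          (hpos (k₁ + n + 1) (by omega)) (hmono (by omega)) (hmono (by omega))
          (by rw [hθ1]; exact hrec (k₁ + n) (by omega))
        rw [← hcdef] at hstep
        push_cast
        calc (s k₁) ^ (-θ) + c * (n + 1) = ((s k₁) ^ (-θ) + c * n) + c := by ring
          _ ≤ (s (k₁ + n)) ^ (-θ) + c := by linarith [ih]
          _ ≤ (s (k₁ + n + 1)) ^ (-θ) := by linarith [hstep]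
    refine ⟨c ^ (-(1/θ)) * 2 ^ (1/θ), by positivity, max (2 * k₁) 2, ?_⟩
    intro k hk
    have hk2 : 2 ≤ k := le_trans (le_max_right _ _) hk
    have hkk1 : 2 * k₁ ≤ k := le_trans (le_max_left _ _) hk
    have hk1k : k₁ ≤ k := by omega
    set n := k - k₁ with hndef
    have hkn : k = k₁ + n := by omega
    have hn1 : 1 ≤ n := by omega
    have hclaim' := hclaim n
    rw [← hkn] at hclaim'
    have hcn : 0 < c * n := by
      have : (1:ℝ) ≤ (n:ℝ) := by exact_mod_cast hn1
      nlinarith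
    have hsk : 0 < s k := hpos k hk1k
    have h8 : c * n ≤ (s k) ^ (-θ) := by
      have : 0 ≤ (s k₁) ^ (-θ) := (rpow_pos_of_pos hA _).le
      linarith
    -- s k ≤ (c n)^(-1/θ)
    have h9 : s k ≤ (c * n) ^ (-(1/θ) : ℝ) := by
      have h10 : ((s k) ^ (-θ)) ^ (-(1/θ) : ℝ) ≤ (c * n) ^ (-(1/θ) : ℝ) :=
        rpow_le_rpow_of_nonpos hcn h8 (neg_nonpos.mpr (by positivity))
      rwa [← rpow_mul hsk.le, show (-θ) * (-(1/θ)) = 1 by field_simp, rpow_one] at h10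
    have h11 : (c * n) ^ (-(1/θ) : ℝ) = c ^ (-(1/θ) : ℝ) * (n:ℝ) ^ (-(1/θ) : ℝ) := by
      rw [mul_rpow hc.le (by positivity)]
    -- n ≥ k/2
    have h12 : (k:ℝ) / 2 ≤ (n:ℝ) := by
      have : (n:ℝ) = (k:ℝ) - (k₁:ℝ) := by
        rw [hndef]; push_cast [Nat.cast_sub hk1k]; ring
      rw [this]
      have : 2 * (k₁:ℝ) ≤ (k:ℝ) := by exact_mod_cast hkk1
      linarith
    have hkpos : (0:ℝ) < (k:ℝ) := by positivity
    have h13 : (n:ℝ) ^ (-(1/θ) : ℝ) ≤ ((k:ℝ)/2) ^ (-(1/θ) : ℝ) :=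
      rpow_le_rpow_of_nonpos (by positivity) h12 (neg_nonpos.mpr (by positivity))
    have h14 : ((k:ℝ)/2) ^ (-(1/θ) : ℝ) = 2 ^ (1/θ : ℝ) * (k:ℝ) ^ (-(1/θ) : ℝ) := by
      rw [div_rpow hkpos.le (by norm_num), rpow_neg (by norm_num : (0:ℝ) ≤ 2)]
      rw [div_inv_eq_mul]
      ring
    calc s k ≤ (c * n) ^ (-(1/θ) : ℝ) := h9
      _ = c ^ (-(1/θ) : ℝ) * (n:ℝ) ^ (-(1/θ) : ℝ) := h11
      _ ≤ c ^ (-(1/θ) : ℝ) * (((k:ℝ)/2) ^ (-(1/θ) : ℝ)) := by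
          apply mul_le_mul_of_nonneg_left h13 (by positivity)
      _ = c ^ (-(1/θ)) * 2 ^ (1/θ) * (k:ℝ) ^ (-(1/θ) : ℝ) := by rw [h14]; ring
  · -- eventually zero case
    push_neg at hpos
    obtain ⟨k₂, hk₂, hsk₂⟩ := hpos
    have hz : s k₂ = 0 := le_antisymm hsk₂ (hnonneg k₂)
    refine ⟨1, one_pos, k₂, ?_⟩
    intro k hk
    have : s k ≤ 0 := hz ▸ hmono hk
    have hsk0 : s k = 0 := le_antisymm this (hnonneg k)
    rw [hsk0, one_mul]
    exact rpow_nonneg (by positivity) _
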